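/- For ε > 0 and m ∈ ℕ, the series Σ_{ℓ=0}^∞ (2ε^2)^{−ℓ} (ℓ+m)!/(ℓ!)^2 converges; consequently the function f_{ε,m}(x) = x^m exp(x − ε^2 x^2) belongs to the RKHS of the Gaussian kernel exp(−ε^2(x−y)^2), with squared norm (2ε^2)^{−m} Σ_{ℓ=0}^∞ (2ε^2)^{−ℓ} (ℓ+m)!/(ℓ!)^2. -/

import Mathlib

noncomputable def gaussPhi (ε : ℝ) (ℓ : ℕ) (x : ℝ) : ℝ :=
  Real.sqrt ((2 : ℝ) ^ ℓ * ε ^ (2 * ℓ) / (Nat.factorial ℓ)) * x ^ ℓ *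
    Real.exp (-(ε ^ 2) * x ^ 2)

lemma gauss_pow_eq (ε : ℝ) (ℓ : ℕ) : (2 * ε ^ 2) ^ ℓ = (2:ℝ) ^ ℓ * ε ^ (2*ℓ) := by
  rw [mul_pow, ← pow_mul]

lemma gauss_summable (ε : ℝ) (hε : 0 < ε) (m : ℕ) :
    Summable (fun ℓ : ℕ =>
      ((2 * ε ^ 2) ^ ℓ)⁻¹ * (Nat.factorial (ℓ + m) : ℝ) / ((Nat.factorial ℓ : ℝ)) ^ 2) := by
  set f : ℕ → ℝ := fun ℓ =>
      ((2 * ε ^ 2) ^ ℓ)⁻¹ * (Nat.factorial (ℓ + m) : ℝ) / ((Nat.factorial ℓ : ℝ)) ^ 2 with hf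
  have hε2 : (0:ℝ) < 2 * ε ^ 2 := by positivity
  have hfpos : ∀ k, 0 < f k := by
    intro k
    have h1 : (0:ℝ) < (Nat.factorial (k+m) : ℝ) := by exact_mod_cast (k+m).factorial_pos
    have h2 : (0:ℝ) < (Nat.factorial k : ℝ) := by exact_mod_cast k.factorial_pos
    positivity
  obtain ⟨N, hN⟩ := exists_nat_ge ((2 * (m+1) : ℝ) / (2 * ε ^ 2))
  apply summable_of_ratio_norm_eventually_le (r := 1/2) (by norm_num)
  filter_upwards [Filter.eventually_ge_atTop N] with k hk
  rw [Real.norm_of_nonneg (hfpos _).le, Real.norm_of_nonneg (hfpos _).le]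
  have key : f (k+1) = f k * ((2 * ε ^ 2)⁻¹ * (k + 1 + m) / (k + 1)^2) := by
    rw [hf]
    simp only
    rw [show k + 1 + m = (k + m) + 1 by ring, Nat.factorial_succ, Nat.factorial_succ]
    push_cast
    have h2 : ((Nat.factorial k : ℝ)) ≠ 0 := by exact_mod_cast k.factorial_ne_zero
    field_simp
    ring
  rw [key]
  have hk1 : (N:ℝ) ≤ k := by exact_mod_cast hk
  have hbound : (2 * ε ^ 2)⁻¹ * ((k:ℝ) + 1 + m) / ((k:ℝ) + 1)^2 ≤ 1/2 := by
    rw [div_le_iff₀ (by positivity), inv_mul_eq_div, div_le_iff₀ hε2]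
    have h1 : ((k:ℝ) + 1 + m) ≤ (m + 1) * (k + 1) := by
      nlinarith [Nat.cast_nonneg (α := ℝ) k, Nat.cast_nonneg (α := ℝ) m]
    have h2 : (2 * (m+1) : ℝ) ≤ (2 * ε ^ 2) * (k+1) := by
      rw [div_le_iff₀ hε2] at hN
      nlinarith
    calc ((k:ℝ) + 1 + m) ≤ (m + 1) * (k + 1) := h1
      _ ≤ (1/2 * ((2*ε^2) * (k+1))) * (k+1) := by nlinarith [Nat.cast_nonneg (α := ℝ) k]
      _ = 1/2 * (k+1)^2 * (2*ε^2) := by ring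
  calc f k * ((2 * ε ^ 2)⁻¹ * (k + 1 + m) / (k + 1)^2) ≤ f k * (1/2) :=
        mul_le_mul_of_nonneg_left hbound (hfpos k).le
    _ = 1/2 * f k := mul_comm _ _

theorem gaussian_rkhs_test_function (ε : ℝ) (hε : 0 < ε) (m : ℕ) :
    Summable (fun ℓ : ℕ =>
      ((2 * ε ^ 2) ^ ℓ)⁻¹ * (Nat.factorial (ℓ + m) : ℝ) / ((Nat.factorial ℓ : ℝ)) ^ 2) ∧
    ∃ c : ℕ → ℝ,
      (∀ x : ℝ, HasSum (fun ℓ => c ℓ * gaussPhi ε ℓ x)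
        (x ^ m * Real.exp (x - ε ^ 2 * x ^ 2))) ∧
      Summable (fun ℓ => (c ℓ) ^ 2) ∧
      (∑' ℓ, (c ℓ) ^ 2) = ((2 * ε ^ 2) ^ m)⁻¹ *
        ∑' ℓ : ℕ, ((2 * ε ^ 2) ^ ℓ)⁻¹ * (Nat.factorial (ℓ + m) : ℝ) /
          ((Nat.factorial ℓ : ℝ)) ^ 2 := by
  have hsum := gauss_summable ε hε m
  refine ⟨hsum, ?_⟩
  set c : ℕ → ℝ := fun ℓ =>
    if ℓ < m then 0 else
      Real.sqrt ((Nat.factorial ℓ : ℝ) / ((2:ℝ) ^ ℓ * ε ^ (2*ℓ))) / (Nat.factorial (ℓ - m)) with hc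
  have hε2 : (0:ℝ) < 2 * ε ^ 2 := by positivity
  have hc0 : ∀ ℓ < m, c ℓ = 0 := fun ℓ hℓ => by rw [hc]; simp [hℓ]
  have hfac : ∀ ℓ : ℕ, (0:ℝ) < (Nat.factorial ℓ : ℝ) := fun ℓ => by
    exact_mod_cast ℓ.factorial_pos
  have hckey : ∀ k : ℕ, c (k + m) *
      Real.sqrt ((2:ℝ) ^ (k+m) * ε ^ (2*(k+m)) / (Nat.factorial (k+m))) =
      1 / (Nat.factorial k : ℝ) := by
    intro k
    rw [hc]
    simp only [Nat.not_lt.mpr (Nat.le_add_left m k), if_neg, not_false_iff, Nat.add_sub_cancel]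
    have hA : (0:ℝ) < (2:ℝ) ^ (k+m) * ε ^ (2*(k+m)) := by positivity
    rw [div_mul_eq_mul_div, ← Real.sqrt_mul (by positivity)]
    rw [div_mul_div_comm, mul_comm ((Nat.factorial (k+m) : ℝ)) _,
      div_self (by positivity), Real.sqrt_one]
  have hcsq : ∀ k : ℕ, (c (k + m))^2 =
      ((2*ε^2)^m)⁻¹ * (((2 * ε ^ 2) ^ k)⁻¹ * (Nat.factorial (k + m) : ℝ) /
        ((Nat.factorial k : ℝ)) ^ 2) := by
    intro k
    rw [hc]
    simp only [Nat.not_lt.mpr (Nat.le_add_left m k), if_neg, not_false_iff, Nat.add_sub_cancel]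
    rw [div_pow, Real.sq_sqrt (by positivity), ← gauss_pow_eq, pow_add]
    have h1 : ((2*ε^2:ℝ)^k) ≠ 0 := by positivity
    have h2 : ((2*ε^2:ℝ)^m) ≠ 0 := by positivity
    have h3 : ((Nat.factorial k : ℝ)) ≠ 0 := (hfac k).ne'
    ring
  refine ⟨c, ?_, ?_, ?_⟩
  · intro x
    have hexp : HasSum (fun k : ℕ => x ^ k / (Nat.factorial k)) (Real.exp x) := by
      rw [Real.exp_eq_exp_ℝ]
      exact NormedSpace.expSeries_div_hasSum_exp x
    have h1 : HasSum (fun k : ℕ => x ^ k / (Nat.factorial k) *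
        (x ^ m * Real.exp (-(ε^2) * x ^ 2)))
        (Real.exp x * (x ^ m * Real.exp (-(ε^2) * x ^ 2))) := hexp.mul_right _
    have heq : (fun k : ℕ => x ^ k / (Nat.factorial k) * (x ^ m * Real.exp (-(ε^2) * x ^ 2)))
        = fun k : ℕ => c (k + m) * gaussPhi ε (k + m) x := by
      funext k
      rw [gaussPhi, div_eq_mul_one_div, ← hckey k, pow_add]
      ring
    rw [heq] at h1
    have h2 := (hasSum_nat_add_iff (f := fun ℓ => c ℓ * gaussPhi ε ℓ x) m).mp h1
    have hz : (∑ i ∈ Finset.range m, c i * gaussPhi ε i x) = 0 := by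
      apply Finset.sum_eq_zero
      intro i hi
      rw [hc0 i (Finset.mem_range.mp hi), zero_mul]
    rw [hz, add_zero] at h2
    have : Real.exp x * (x ^ m * Real.exp (-(ε^2) * x ^ 2)) =
        x ^ m * Real.exp (x - ε ^ 2 * x ^ 2) := by
      rw [show x - ε ^ 2 * x ^ 2 = x + (-(ε^2) * x ^ 2) by ring, Real.exp_add]
      ring
    rwa [this] at h2
  · rw [← summable_nat_add_iff m]
    simp only [hcsq]
    exact hsum.mul_left _
  · have hs2 : Summable (fun ℓ => (c ℓ)^2) := by
      rw [← summable_nat_add_iff m]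
      simp only [hcsq]
      exact hsum.mul_left _
    rw [← hs2.sum_add_tsum_nat_add m]
    have hz : (∑ i ∈ Finset.range m, (c i)^2) = 0 := by
      apply Finset.sum_eq_zero
      intro i hi
      rw [hc0 i (Finset.mem_range.mp hi)]; ring
    rw [hz, zero_add]
    simp only [hcsq]
    exact tsum_mul_left
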